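/- Let R be a discrete valuation domain with prime element p and let λ be a limit ordinal. A short exact sequence 0 → A → B →^π C → 0 of torsion R-modules is λ-balanced if and only if for every ordinal β < λ every homomorphism f: P_β → C lifts along π to a homomorphism P_β → B; equivalently, if and only if 0 → Hom_R(P_β, A) → Hom_R(P_β, B) → Hom_R(P_β, C) → 0 is exact for each β < λ. -/

import Mathlib

universe u v w

open Ordinal

noncomputable def pPow (R : Type u) [CommRing R] (p : R) (G : Type v) [AddCommGroup G]
    [Module R G] (σ : Ordinal.{w}) : Submodule R G :=
  Ordinal.limitRecOn σ ⊤ (fun _ N => N.map (LinearMap.lsmul R G p))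
    (fun o _ ih => ⨅ ρ : Set.Iio o, ih ρ.1 ρ.2)

/-- Generators of the Walker module `P β`: strictly decreasing finite sequences of ordinals
starting with `β` (encoded by their tails). -/
def WalkerGen (β : Ordinal.{w}) : Type (w + 1) :=
  {l : List Ordinal.{w} // (β :: l).Chain' (· > ·)}

/-- The defining relation of the Walker module attached to a generator `g`:
`p • g - g'` where `g'` is obtained by deleting the last entry of `g`
(interpreted as `0` when `g` is the length-one sequence `β`). -/
noncomputable def walkerRel (R : Type u) [CommRing R] (p : R) (β : Ordinal.{w})
    (g : WalkerGen β) : WalkerGen β →₀ R :=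
  p • Finsupp.single g 1 -
    if _h : g.1 = [] then 0
    else Finsupp.single
      ⟨g.1.dropLast, g.2.sublist ((g.1.dropLast_sublist).cons₂ β)⟩ 1

/-- The Walker module `P β` over a discrete valuation domain with prime `p`. -/
noncomputable abbrev WalkerModule (R : Type u) [CommRing R] (p : R) (β : Ordinal.{w}) :=
  (WalkerGen β →₀ R) ⧸ Submodule.span R (Set.range (walkerRel R p β))

/-- The image in `P β` of a generator. -/
noncomputable def walkerMk (R : Type u) [CommRing R] (p : R) (β : Ordinal.{w})
    (g : WalkerGen β) : WalkerModule R p β :=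
  Submodule.Quotient.mk (Finsupp.single g 1)

/-- The distinguished generator `β` of the Walker module `P β`. -/
noncomputable def walkerTop (R : Type u) [CommRing R] (p : R) (β : Ordinal.{w}) :
    WalkerModule R p β :=
  walkerMk R p β ⟨[], List.isChain_singleton β⟩

/-- A submodule `N ≤ B` is `λ`-balanced: `p^σ B ⊓ N = p^σ N` and
`p^σ (B/N) = (p^σ B + N)/N` for all `σ < λ`. -/
def IsLamBalanced (R : Type u) [CommRing R] (p : R) {B : Type v} [AddCommGroup B]
    [Module R B] (lam : Ordinal.{w}) (N : Submodule R B) : Prop :=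
  ∀ σ < lam, pPow R p B σ ⊓ N = (pPow R p (↥N) σ).map N.subtype ∧
    pPow R p (B ⧸ N) σ = (pPow R p B σ ⊔ N).map N.mkQ


section basics
variable (R : Type u) [CommRing R] (p : R) (G : Type v) [AddCommGroup G] [Module R G]

lemma pPow_zero : pPow R p G (0 : Ordinal.{w}) = ⊤ := Ordinal.limitRecOn_zero _ _ _

lemma pPow_succ (σ : Ordinal.{w}) :
    pPow R p G (σ + 1) = (pPow R p G σ).map (LinearMap.lsmul R G p) := by
  rw [show σ + 1 = Order.succ σ from Ordinal.add_one_eq_succ σ]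
  exact Ordinal.limitRecOn_succ _ _ _ _

lemma pPow_limit (σ : Ordinal.{w}) (h : Order.IsSuccLimit σ) :
    pPow R p G σ = ⨅ ρ : Set.Iio σ, pPow R p G ρ.1 :=
  Ordinal.limitRecOn_limit _ _ _ _ h

variable {R p G}

lemma mem_pPow_succ {x : G} {σ : Ordinal.{w}} :
    x ∈ pPow R p G (σ + 1) ↔ ∃ y ∈ pPow R p G σ, p • y = x := by
  rw [pPow_succ]
  simp [Submodule.mem_map, LinearMap.lsmul_apply]

lemma pPow_anti {τ σ : Ordinal.{w}} (h : τ ≤ σ) : pPow R p G σ ≤ pPow R p G τ := by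
  induction σ using Ordinal.induction with
  | h σ IH =>
    rcases eq_or_lt_of_le h with rfl | hlt
    · exact le_rfl
    rcases Ordinal.zero_or_succ_or_isSuccLimit σ with h0 | ⟨ρ, rfl⟩ | hlim
    · exact absurd (h0 ▸ hlt) not_lt_zero
    · rw [← Ordinal.add_one_eq_succ, pPow_succ]
      refine le_trans ?_ (IH ρ (Order.lt_succ ρ)
        (Order.lt_succ_iff.mp ((Ordinal.add_one_eq_succ ρ) ▸ hlt)))
      rintro x ⟨y, hy, rfl⟩
      exact Submodule.smul_mem _ p hy
    · rw [pPow_limit R p G σ hlim]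
      exact le_trans (iInf_le _ ⟨τ, hlt⟩) le_rfl

lemma pPow_map_le {H : Type v} [AddCommGroup H] [Module R H] (φ : G →ₗ[R] H)
    (σ : Ordinal.{w}) : (pPow R p G σ).map φ ≤ pPow R p H σ := by
  induction σ using Ordinal.induction with
  | h σ IH =>
    rcases Ordinal.zero_or_succ_or_isSuccLimit σ with rfl | ⟨ρ, rfl⟩ | hlim
    · rw [pPow_zero R p H]; exact le_top
    · rw [← Ordinal.add_one_eq_succ, pPow_succ, pPow_succ]
      rintro x ⟨y, ⟨z, hz, rfl⟩, rfl⟩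
      exact ⟨φ z, IH ρ (Order.lt_succ ρ) ⟨z, hz, rfl⟩, (by simp)⟩
    · rw [pPow_limit R p G σ hlim, pPow_limit R p H σ hlim]
      rintro x ⟨y, hy, rfl⟩
      refine Submodule.mem_iInf _ |>.mpr fun ρ => ?_
      exact IH ρ.1 ρ.2 ⟨y, (Submodule.mem_iInf _).mp hy ρ, rfl⟩

lemma exists_smul_eq_of_mem_pPow {x : G} {τ σ : Ordinal.{w}} (h : τ < σ)
    (hx : x ∈ pPow R p G σ) : ∃ y ∈ pPow R p G τ, p • y = x :=
  mem_pPow_succ.mp (pPow_anti (by rwa [Ordinal.add_one_eq_succ, Order.succ_le_iff]) hx)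

lemma pPow_map_equiv {H : Type v} [AddCommGroup H] [Module R H] (e : G ≃ₗ[R] H)
    (σ : Ordinal.{w}) : (pPow R p G σ).map (e : G →ₗ[R] H) = pPow R p H σ := by
  refine le_antisymm (pPow_map_le _ _) ?_
  intro x hx
  have : e.symm x ∈ pPow R p G σ :=
    pPow_map_le (e.symm : H →ₗ[R] G) σ ⟨x, hx, rfl⟩
  exact ⟨e.symm x, this, by simp⟩

end basics

-- ============ generator combinatorics ============
section gen
variable {β : Ordinal.{w}}

def wlabel (β : Ordinal.{w}) (g : WalkerGen β) : Ordinal.{w} :=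
  (β :: g.1).getLast (List.cons_ne_nil _ _)

lemma wlabel_nil (h : ((β : Ordinal.{w}) :: ([] : List Ordinal.{w})).Chain' (· > ·)) :
    wlabel β ⟨[], h⟩ = β := rfl

lemma wlabel_eq_getLast (g : WalkerGen β) (h : g.1 ≠ []) :
    wlabel β g = g.1.getLast h := by
  unfold wlabel
  exact List.getLast_cons h

lemma pairwise_of_gen (g : WalkerGen β) : (β :: g.1).Pairwise (· > ·) :=
  (List.isChain_iff_pairwise.mp g.2)

lemma wlabel_le (g : WalkerGen β) : wlabel β g ≤ β := by
  rcases eq_or_ne g.1 [] with h | h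
  · unfold wlabel
    rcases g with ⟨l, hl⟩
    subst h
    exact le_rfl
  · rw [wlabel_eq_getLast g h]
    have := (List.pairwise_cons.mp (pairwise_of_gen g)).1
    exact le_of_lt (this _ (List.getLast_mem h))

def gext (g : WalkerGen β) (τ : Ordinal.{w}) (hτ : τ < wlabel β g) : WalkerGen β :=
  ⟨g.1 ++ [τ], by
    have : (β :: (g.1 ++ [τ])) = (β :: g.1) ++ [τ] := by simp
    rw [this]
    simp only [List.Chain']
    rw [List.isChain_append]
    refine ⟨g.2, List.isChain_singleton τ, ?_⟩
    intro x hx y hy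
    simp only [List.head?_cons, Option.mem_def, Option.some.injEq] at hy
    rw [List.getLast?_eq_getLast (List.cons_ne_nil _ _), Option.mem_def,
      Option.some.injEq] at hx
    subst hy; rw [← hx]; exact hτ⟩

lemma gext_ne (g : WalkerGen β) (τ : Ordinal.{w}) (hτ : τ < wlabel β g) :
    (gext g τ hτ).1 ≠ [] := by simp [gext]

lemma gext_dropLast (g : WalkerGen β) (τ : Ordinal.{w}) (hτ : τ < wlabel β g) :
    (gext g τ hτ).1.dropLast = g.1 := by simp [gext]

lemma wlabel_gext (g : WalkerGen β) (τ : Ordinal.{w}) (hτ : τ < wlabel β g) :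
    wlabel β (gext g τ hτ) = τ := by
  rw [wlabel_eq_getLast _ (gext_ne g τ hτ)]
  simp [gext]

lemma wlabel_dropLast_gt (g : WalkerGen β) (h : g.1 ≠ []) :
    wlabel β g <
      wlabel β ⟨g.1.dropLast, g.2.sublist ((g.1.dropLast_sublist).cons₂ β)⟩ := by
  have hdec : β :: g.1 = (β :: g.1.dropLast) ++ [g.1.getLast h] := by
    simp [List.dropLast_append_getLast h]
  have hch := g.2
  rw [hdec] at hch
  simp only [List.Chain'] at hch
  rw [List.isChain_append] at hch
  obtain ⟨h1, h2, h3⟩ := hch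
  have := h3 _ (by rw [List.getLast?_eq_getLast (List.cons_ne_nil _ _)]; rfl)
    (g.1.getLast h) rfl
  rw [wlabel_eq_getLast g h]
  exact this
end gen


-- ============ module relations ============
section rel
variable {R : Type u} [CommRing R] {p : R} {β : Ordinal.{w}}

lemma walkerMk_dropLast (R : Type u) [CommRing R] (p : R) {β : Ordinal.{w}}
    (g : WalkerGen β) (h : g.1 ≠ []) :
    p • walkerMk R p β g =
      walkerMk R p β ⟨g.1.dropLast, g.2.sublist ((g.1.dropLast_sublist).cons₂ β)⟩ := by
  unfold walkerMk
  rw [← Submodule.Quotient.mk_smul, Submodule.Quotient.eq]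
  refine Submodule.subset_span ⟨g, ?_⟩
  rw [walkerRel, dif_neg h]

lemma smul_walkerTop (R : Type u) [CommRing R] (p : R) (β : Ordinal.{w}) :
    p • walkerTop R p β = 0 := by
  unfold walkerTop walkerMk
  rw [← Submodule.Quotient.mk_smul, Submodule.Quotient.mk_eq_zero]
  refine Submodule.subset_span ⟨⟨[], List.isChain_singleton β⟩, ?_⟩
  unfold walkerRel
  rw [dif_pos rfl]
  exact _root_.sub_zero _

lemma smul_walkerMk_gext (R : Type u) [CommRing R] (p : R) {β : Ordinal.{w}}
    (g : WalkerGen β) (τ : Ordinal.{w}) (hτ : τ < wlabel β g) :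
    p • walkerMk R p β (gext g τ hτ) = walkerMk R p β g := by
  rw [walkerMk_dropLast R p (gext g τ hτ) (gext_ne g τ hτ)]
  congr 1
  exact Subtype.ext (gext_dropLast g τ hτ)

lemma hom_apply_mem_pPow {G : Type v} [AddCommGroup G] [Module R G]
    (h : WalkerModule R p β →ₗ[R] G) (g : WalkerGen β) :
    h (walkerMk R p β g) ∈ pPow R p G (wlabel β g) := by
  suffices H : ∀ σ : Ordinal.{w}, ∀ g : WalkerGen β, wlabel β g = σ →
      h (walkerMk R p β g) ∈ pPow R p G σ from H _ g rfl
  intro σ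
  induction σ using Ordinal.induction with
  | h σ IH =>
    intro g hg
    have key : ∀ τ < σ, h (walkerMk R p β g) ∈ pPow R p G (τ + 1) := by
      intro τ hτ
      have hτ' : τ < wlabel β g := hg ▸ hτ
      have hrel := smul_walkerMk_gext R p g τ hτ'
      have : h (walkerMk R p β g) = p • h (walkerMk R p β (gext g τ hτ')) := by
        rw [← map_smul, hrel]
      rw [this]
      exact mem_pPow_succ.mpr ⟨_, IH τ hτ _ (wlabel_gext g τ hτ'), rfl⟩
    rcases Ordinal.zero_or_succ_or_isSuccLimit σ with rfl | ⟨ρ, rfl⟩ | hlim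
    · rw [pPow_zero]; trivial
    · rw [← Ordinal.add_one_eq_succ]
      exact key ρ (Ordinal.add_one_eq_succ ρ ▸ Order.lt_succ ρ)
    · rw [pPow_limit R p G σ hlim]
      refine Submodule.mem_iInf _ |>.mpr fun ρ => ?_
      exact pPow_anti (le_of_lt (lt_add_one ρ.1)) (key ρ.1 ρ.2)

end rel

section construct
variable {R : Type u} [CommRing R] {p : R} {G : Type v} [AddCommGroup G] [Module R G]
variable {β : Ordinal.{w}}

/-- Recursive construction of a witness system over reversed generator lists. -/
noncomputable def wrec (P : WalkerGen β → G → Prop)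
    (hstep : ∀ (g : WalkerGen β) (hne : g.1 ≠ []) (x : G),
        P ⟨g.1.dropLast, g.2.sublist ((g.1.dropLast_sublist).cons₂ β)⟩ x →
        ∃ y, P g y ∧ p • y = x)
    (x₀ : G) (hx₀ : ∀ h, P ⟨[], h⟩ x₀) :
    (m : List Ordinal.{w}) → (hm : (β :: m.reverse).Chain' (· > ·)) →
      {x : G // P ⟨m.reverse, hm⟩ x}
  | [], hm => ⟨x₀, hx₀ hm⟩
  | τ :: m, hm => by
    have hrev : (τ :: m).reverse = m.reverse ++ [τ] := by simp
    have hm2 : ((β :: m.reverse) ++ [τ]).Chain' (· > ·) := by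
      have := hm; rw [hrev] at this
      simpa using this
    have hm' : (β :: m.reverse).Chain' (· > ·) := (List.isChain_append.mp hm2).1
    have prev := wrec P hstep x₀ hx₀ m hm'
    have hne : ((⟨(τ :: m).reverse, hm⟩ : WalkerGen β)).1 ≠ [] := by simp
    have hgen : (⟨m.reverse, hm'⟩ : WalkerGen β) =
        ⟨((τ :: m).reverse).dropLast,
          hm.sublist ((((τ :: m).reverse).dropLast_sublist).cons₂ β)⟩ :=
      Subtype.ext (by simp)
    exact ⟨(hstep ⟨(τ :: m).reverse, hm⟩ hne prev.1 (hgen ▸ prev.2)).choose,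
      (hstep ⟨(τ :: m).reverse, hm⟩ hne prev.1 (hgen ▸ prev.2)).choose_spec.1⟩

lemma wrec_smul (P : WalkerGen β → G → Prop)
    (hstep : ∀ (g : WalkerGen β) (hne : g.1 ≠ []) (x : G),
        P ⟨g.1.dropLast, g.2.sublist ((g.1.dropLast_sublist).cons₂ β)⟩ x →
        ∃ y, P g y ∧ p • y = x)
    (x₀ : G) (hx₀ : ∀ h, P ⟨[], h⟩ x₀)
    (τ : Ordinal.{w}) (m : List Ordinal.{w})
    (hm : (β :: (τ :: m).reverse).Chain' (· > ·))
    (hm' : (β :: m.reverse).Chain' (· > ·)) :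
    p • (wrec P hstep x₀ hx₀ (τ :: m) hm).1 = (wrec P hstep x₀ hx₀ m hm').1 := by
  have hgen : (⟨m.reverse, hm'⟩ : WalkerGen β) =
      ⟨((τ :: m).reverse).dropLast,
        hm.sublist ((((τ :: m).reverse).dropLast_sublist).cons₂ β)⟩ :=
    Subtype.ext (by simp)
  simp only [wrec]
  exact (hstep ⟨(τ :: m).reverse, hm⟩ (by simp)
    (wrec P hstep x₀ hx₀ m hm').1 (hgen ▸ (wrec P hstep x₀ hx₀ m hm').2)).choose_spec.2

end construct

section construct2
variable {R : Type u} [CommRing R] {p : R} {G : Type v} [AddCommGroup G] [Module R G]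
variable {β : Ordinal.{w}}

variable (P : WalkerGen β → G → Prop)
    (hstep : ∀ (g : WalkerGen β) (hne : g.1 ≠ []) (x : G),
        P ⟨g.1.dropLast, g.2.sublist ((g.1.dropLast_sublist).cons₂ β)⟩ x →
        ∃ y, P g y ∧ p • y = x)
    (x₀ : G) (hx₀ : ∀ h, P ⟨[], h⟩ x₀)

/-- The witness system as a function on all generators. -/
noncomputable def wsys (g : WalkerGen β) : G :=
  (wrec P hstep x₀ hx₀ g.1.reverse
    (by rw [List.reverse_reverse]; exact g.2)).1

lemma wsys_eq (l : List Ordinal.{w}) (hl : (β :: l).Chain' (· > ·))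
    (m : List Ordinal.{w}) (hm : (β :: m.reverse).Chain' (· > ·))
    (e : l = m.reverse) :
    wsys P hstep x₀ hx₀ ⟨l, hl⟩ = (wrec P hstep x₀ hx₀ m hm).1 := by
  have h2 : l.reverse = m := by rw [e, List.reverse_reverse]
  subst h2
  rfl

lemma wsys_spec (g : WalkerGen β) : P g (wsys P hstep x₀ hx₀ g) := by
  obtain ⟨l, hl⟩ := g
  have pf : (β :: l.reverse.reverse).Chain' (· > ·) := by
    rw [List.reverse_reverse]; exact hl
  have hgen : (⟨l.reverse.reverse, pf⟩ : WalkerGen β)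
      = ⟨l, hl⟩ := Subtype.ext (List.reverse_reverse l)
  rw [wsys_eq P hstep x₀ hx₀ l hl l.reverse pf (List.reverse_reverse l).symm]
  exact hgen ▸ (wrec P hstep x₀ hx₀ l.reverse pf).2

lemma wsys_nil (g : WalkerGen β) (hg : g.1 = []) : wsys P hstep x₀ hx₀ g = x₀ := by
  obtain ⟨l, hl⟩ := g
  subst hg
  rfl

lemma wsys_rel (g : WalkerGen β) (hg : g.1 ≠ []) :
    p • wsys P hstep x₀ hx₀ g =
      wsys P hstep x₀ hx₀ ⟨g.1.dropLast, g.2.sublist ((g.1.dropLast_sublist).cons₂ β)⟩ := by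
  obtain ⟨l, hl⟩ := g
  simp only at hg ⊢
  set τ := l.getLast hg with hτ
  set m := l.dropLast with hmdef
  have hlm : l = m ++ [τ] := (List.dropLast_append_getLast hg).symm
  have e1 : l = (τ :: m.reverse).reverse := by
    simp [hlm]
  have hm1 : (β :: (τ :: m.reverse).reverse).Chain' (· > ·) := by rw [← e1]; exact hl
  have e2 : m = (m.reverse).reverse := (List.reverse_reverse m).symm
  have hm2 : (β :: (m.reverse).reverse).Chain' (· > ·) := by
    rw [← e2]
    exact hl.sublist ((l.dropLast_sublist).cons₂ β)
  rw [wsys_eq P hstep x₀ hx₀ l hl (τ :: m.reverse) hm1 e1,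
    wsys_eq P hstep x₀ hx₀ l.dropLast (hl.sublist ((l.dropLast_sublist).cons₂ β))
      m.reverse hm2 e2]
  exact wrec_smul P hstep x₀ hx₀ τ m.reverse hm1 hm2

include hstep hx₀

/-- Master construction lemma. -/
lemma walker_construct (hpx₀ : p • x₀ = 0) :
    ∃ h : WalkerModule R p β →ₗ[R] G,
      (∀ g, P g (h (walkerMk R p β g))) ∧ h (walkerTop R p β) = x₀ := by
  set v := wsys P hstep x₀ hx₀ with hv
  set φ := Finsupp.linearCombination R v with hφ
  have hφone : ∀ g : WalkerGen β, φ (Finsupp.single g 1) = v g := by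
    intro g
    rw [hφ, Finsupp.linearCombination_single, one_smul]
  have hker : Submodule.span R (Set.range (walkerRel R p β)) ≤ LinearMap.ker φ := by
    rw [Submodule.span_le]
    rintro _ ⟨g, rfl⟩
    have : φ (walkerRel R p β g) = 0 := by
      rw [walkerRel, map_sub, map_smul, hφone]
      by_cases hg : g.1 = []
      · rw [dif_pos hg, map_zero, _root_.sub_zero, hv, wsys_nil P hstep x₀ hx₀ g hg, hpx₀]
      · rw [dif_neg hg]
        erw [hφone]
        rw [hv, wsys_rel P hstep x₀ hx₀ g hg, _root_.sub_self]
    exact this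
  have hmk : ∀ g : WalkerGen β, Submodule.liftQ _ φ hker (walkerMk R p β g) = v g := by
    intro g
    rw [← hφone g]
    rfl
  refine ⟨Submodule.liftQ _ φ hker, fun g => ?_, ?_⟩
  · rw [hmk g]
    exact wsys_spec P hstep x₀ hx₀ g
  · rw [walkerTop]
    erw [hmk]
    exact wsys_nil P hstep x₀ hx₀ _ rfl

end construct2

-- ============ homs out of Walker modules ============
section homs
variable {R : Type u} [CommRing R] {p : R} {G : Type v} [AddCommGroup G] [Module R G]
variable {β : Ordinal.{w}}

lemma smul_hom_walkerTop (h : WalkerModule R p β →ₗ[R] G) :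
    p • h (walkerTop R p β) = 0 := by
  rw [← map_smul, smul_walkerTop, map_zero]

lemma hom_walkerTop_mem (h : WalkerModule R p β →ₗ[R] G) :
    h (walkerTop R p β) ∈ pPow R p G β :=
  hom_apply_mem_pPow h ⟨[], List.isChain_singleton β⟩

lemma exists_hom_of_mem (c : G) (hc : c ∈ pPow R p G β) (hpc : p • c = 0) :
    ∃ h : WalkerModule R p β →ₗ[R] G, h (walkerTop R p β) = c := by
  obtain ⟨h, _, htop⟩ := walker_construct
    (fun g x => x ∈ pPow R p G (wlabel β g))
    (fun g hne x hx => by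
      obtain ⟨y, hy, hpy⟩ := exists_smul_eq_of_mem_pPow (wlabel_dropLast_gt g hne) hx
      exact ⟨y, hy, hpy⟩)
    c (fun h => hc) hpc
  exact ⟨h, htop⟩

end homs

-- ============ the two main directions ============
section main
variable {R : Type u} [CommRing R] {p : R}
variable {lam : Ordinal.{w}}
variable {B C : Type v} [AddCommGroup B] [Module R B] [AddCommGroup C] [Module R C]
variable {π : B →ₗ[R] C} {N : Submodule R B}

/-- From balancedness: `p^σ C = π(p^σ B)`. -/
lemma pPow_C_eq (hπ : Function.Surjective π) (hN : N = LinearMap.ker π)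
    (hbal2 : pPow R p (B ⧸ N) σ = (pPow R p B σ ⊔ N).map N.mkQ) :
    pPow R p C σ = (pPow R p B σ).map π := by
  have hle : N ≤ LinearMap.ker π := le_of_eq hN
  set μ : (B ⧸ N) →ₗ[R] C := N.liftQ π hle with hμ
  have hμmk : ∀ x : B, μ (N.mkQ x) = π x := fun x => rfl
  have hμinj : Function.Injective μ := by
    rw [← LinearMap.ker_eq_bot]
    exact Submodule.ker_liftQ_eq_bot _ _ _ (le_of_eq hN.symm)
  have hμsurj : Function.Surjective μ := fun c => by
    obtain ⟨b, rfl⟩ := hπ c; exact ⟨N.mkQ b, rfl⟩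
  set eπ := LinearEquiv.ofBijective μ ⟨hμinj, hμsurj⟩ with heπ
  refine le_antisymm ?_ (pPow_map_le π σ)
  intro c hc
  have hq : eπ.symm c ∈ pPow R p (B ⧸ N) σ :=
    pPow_map_le (eπ.symm : C →ₗ[R] (B ⧸ N)) σ ⟨c, hc, rfl⟩
  rw [hbal2] at hq
  obtain ⟨x, hx, hq⟩ := hq
  obtain ⟨b, hb, n, hn, rfl⟩ := Submodule.mem_sup.mp hx
  have hc' : c = π (b + n) := by
    have : μ (eπ.symm c) = c := eπ.apply_symm_apply c
    rw [← this, ← hq, hμmk]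
  have : π n = 0 := by rw [← LinearMap.mem_ker, ← hN]; exact hn
  exact ⟨b, hb, by rw [hc', map_add, this, add_zero]⟩

/-- From balancedness: division inside `N`. -/
lemma N_step (hbal1 : pPow R p B (τ + 1) ⊓ N = (pPow R p (↥N) (τ + 1)).map N.subtype)
    {x : B} (hxN : x ∈ N) (hx : x ∈ pPow R p B (τ + 1)) :
    ∃ n, n ∈ N ∧ n ∈ pPow R p B τ ∧ p • n = x := by
  have : x ∈ (pPow R p (↥N) (τ + 1)).map N.subtype := by
    rw [← hbal1]; exact ⟨hx, hxN⟩
  obtain ⟨y, hy, rfl⟩ := this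
  obtain ⟨z, hz, hpz⟩ := mem_pPow_succ.mp hy
  refine ⟨N.subtype z, z.2, pPow_map_le N.subtype τ ⟨z, hz, rfl⟩, ?_⟩
  rw [← hpz]; rfl

lemma bal_to_lift (hlam : Order.IsSuccLimit lam)
    (hπ : Function.Surjective π) (hN : N = LinearMap.ker π)
    (Hbal : ∀ σ < lam, pPow R p B σ ⊓ N = (pPow R p (↥N) σ).map N.subtype ∧
      pPow R p (B ⧸ N) σ = (pPow R p B σ ⊔ N).map N.mkQ)
    {β : Ordinal.{w}} (hβ : β < lam) (f : WalkerModule R p β →ₗ[R] C) :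
    ∃ g : WalkerModule R p β →ₗ[R] B, π ∘ₗ g = f := by
  have hsucc : ∀ τ < lam, τ + 1 < lam := by
    intro τ hτ
    rw [Ordinal.add_one_eq_succ]
    exact hlam.succ_lt hτ
  have hker : ∀ x : B, π x = 0 → x ∈ N := by
    intro x hx; rw [hN]; exact hx
  -- base point
  have hc : f (walkerTop R p β) ∈ pPow R p C β := hom_walkerTop_mem f
  have hpc : p • f (walkerTop R p β) = 0 := smul_hom_walkerTop f
  rw [pPow_C_eq hπ hN (Hbal β hβ).2] at hc
  obtain ⟨b₀, hb₀, hπb₀⟩ := hc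
  have hpb₀ : p • b₀ ∈ pPow R p B (β + 1) := mem_pPow_succ.mpr ⟨b₀, hb₀, rfl⟩
  have hpb₀N : p • b₀ ∈ N := hker _ (by rw [map_smul, hπb₀, hpc])
  obtain ⟨n₀, hn₀N, hn₀, hpn₀⟩ := N_step (Hbal (β + 1) (hsucc β hβ)).1 hpb₀N hpb₀
  set x₀ := b₀ - n₀ with hx₀def
  have hπx₀ : π x₀ = f (walkerTop R p β) := by
    have : π n₀ = 0 := by rw [← LinearMap.mem_ker, ← hN]; exact hn₀N
    rw [hx₀def, map_sub, this, _root_.sub_zero, hπb₀]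
  have hpx₀ : p • x₀ = 0 := by rw [hx₀def, smul_sub, hpn₀, _root_.sub_self]
  have hx₀mem : x₀ ∈ pPow R p B β := sub_mem hb₀ hn₀
  -- the lifting system
  obtain ⟨h, hP, -⟩ := walker_construct
    (fun g x => π x = f (walkerMk R p β g) ∧ x ∈ pPow R p B (wlabel β g))
    (fun g hne x hx => by
      obtain ⟨hπx, hxmem⟩ := hx
      set d : WalkerGen β :=
        ⟨g.1.dropLast, g.2.sublist ((g.1.dropLast_sublist).cons₂ β)⟩ with hd
      have hττ' : wlabel β g < wlabel β d := wlabel_dropLast_gt g hne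
      have hτlam : wlabel β g < lam := lt_of_le_of_lt (wlabel_le g) hβ
      have hfc : f (walkerMk R p β g) ∈ pPow R p C (wlabel β g) :=
        hom_apply_mem_pPow f g
      rw [pPow_C_eq hπ hN (Hbal _ hτlam).2] at hfc
      obtain ⟨b₁, hb₁, hπb₁⟩ := hfc
      have hxsub : x - p • b₁ ∈ pPow R p B (wlabel β g + 1) := by
        refine sub_mem ?_ (mem_pPow_succ.mpr ⟨b₁, hb₁, rfl⟩)
        refine pPow_anti ?_ hxmem
        rw [Ordinal.add_one_eq_succ]
        exact Order.succ_le_of_lt hττ'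
      have hxsubN : x - p • b₁ ∈ N := by
        refine hker _ ?_
        have hrel : p • f (walkerMk R p β g) = f (walkerMk R p β d) := by
          rw [← map_smul, walkerMk_dropLast R p g hne]
        rw [map_sub, map_smul, hπb₁, hπx, hrel, _root_.sub_self]
      obtain ⟨n', hn'N, hn', hpn'⟩ :=
        N_step (Hbal _ (hsucc _ hτlam)).1 hxsubN hxsub
      refine ⟨b₁ + n', ⟨?_, add_mem hb₁ hn'⟩, ?_⟩
      · have : π n' = 0 := by rw [← LinearMap.mem_ker, ← hN]; exact hn'N
        rw [map_add, hπb₁, this, add_zero]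
      · rw [smul_add, hpn']
        abel)
    x₀ (fun hh => ⟨hπx₀, hx₀mem⟩) hpx₀
  refine ⟨h, ?_⟩
  apply Submodule.linearMap_qext
  apply Finsupp.lhom_ext
  intro a b
  have hsingle : (Finsupp.single a b : WalkerGen β →₀ R) = b • Finsupp.single a 1 := by
    rw [Finsupp.smul_single, _root_.smul_eq_mul, mul_one]
  have hmk : (Submodule.span R (Set.range (walkerRel R p β))).mkQ (Finsupp.single a b)
      = b • walkerMk R p β a := by
    rw [hsingle, map_smul]; rfl
  simp only [LinearMap.comp_apply, hmk, map_smul]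
  rw [(hP a).1]

end main

-- ============ lifting implies balanced ============
section main2
variable {R : Type u} [CommRing R] [IsDomain R] [IsDiscreteValuationRing R] {p : R}
variable {lam : Ordinal.{w}}
variable {B C : Type v} [AddCommGroup B] [Module R B] [AddCommGroup C] [Module R C]
variable {π : B →ₗ[R] C} {N : Submodule R B}

/-- Surjectivity on `p`-heights from the lifting hypothesis, `p`-torsion case. -/
lemma lift_surj_ppow_torsion
    (Hlift : ∀ β < lam, ∀ f : WalkerModule R p β →ₗ[R] C,
      ∃ g : WalkerModule R p β →ₗ[R] B, π ∘ₗ g = f)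
    {σ : Ordinal.{w}} (hσ : σ < lam) {c : C} (hc : c ∈ pPow R p C σ)
    (hpc : p • c = 0) : c ∈ (pPow R p B σ).map π := by
  obtain ⟨f, hf⟩ := exists_hom_of_mem (β := σ) c hc hpc
  obtain ⟨g, hg⟩ := Hlift σ hσ f
  refine ⟨g (walkerTop R p σ), hom_walkerTop_mem g, ?_⟩
  have := LinearMap.congr_fun hg (walkerTop R p σ)
  rw [LinearMap.comp_apply] at this
  rw [this, hf]

lemma lift_surj_ppow (hp : Irreducible p) (hlam : Order.IsSuccLimit lam)
    (hC : Module.IsTorsion R C)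
    (Hlift : ∀ β < lam, ∀ f : WalkerModule R p β →ₗ[R] C,
      ∃ g : WalkerModule R p β →ₗ[R] B, π ∘ₗ g = f)
    {σ : Ordinal.{w}} (hσ : σ < lam) : pPow R p C σ ≤ (pPow R p B σ).map π := by
  have key : ∀ n : ℕ, ∀ σ < lam, ∀ c ∈ pPow R p C σ, p ^ n • c = 0 →
      c ∈ (pPow R p B σ).map π := by
    intro n
    induction n with
    | zero =>
      intro σ hσ c hc hpc
      rw [pow_zero, one_smul] at hpc
      rw [hpc]; exact zero_mem _
    | succ n IH =>
      intro σ hσ c hc hpc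
      have hσ1 : σ + 1 < lam := by
        rw [Ordinal.add_one_eq_succ]; exact hlam.succ_lt hσ
      have hpc1 : p • c ∈ pPow R p C (σ + 1) := mem_pPow_succ.mpr ⟨c, hc, rfl⟩
      have hppc : p ^ n • (p • c) = 0 := by
        rw [← mul_smul, ← pow_succ, hpc]
      obtain ⟨b₁, hb₁, hπb₁⟩ := IH (σ + 1) hσ1 (p • c) hpc1 hppc
      obtain ⟨b₂, hb₂, hpb₂⟩ := mem_pPow_succ.mp hb₁
      have hd : c - π b₂ ∈ pPow R p C σ :=
        sub_mem hc (pPow_map_le π σ ⟨b₂, hb₂, rfl⟩)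
      have hpd : p • (c - π b₂) = 0 := by
        rw [smul_sub, ← map_smul, hpb₂, hπb₁, _root_.sub_self]
      obtain ⟨b₃, hb₃, hπb₃⟩ := lift_surj_ppow_torsion Hlift hσ hd hpd
      exact ⟨b₂ + b₃, add_mem hb₂ hb₃, by rw [map_add, hπb₃]; abel⟩
  intro c hc
  obtain ⟨r, hr⟩ := @hC c
  have hr0 : (r : R) ≠ 0 := nonZeroDivisors.ne_zero r.2
  obtain ⟨n, u, hru⟩ := IsDiscreteValuationRing.eq_unit_mul_pow_irreducible hr0 hp
  have hpn : p ^ n • c = 0 := by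
    have h1 : ((u : R) * p ^ n) • c = 0 := by rw [← hru]; exact hr
    rw [mul_smul] at h1
    have := congrArg (fun x => (↑u⁻¹ : R) • x) h1
    simpa [← mul_smul] using this
  exact key n σ hσ c hc hpn

/-- Division inside `N` from the lifting hypothesis. -/
lemma lift_N_step
    (Hlift : ∀ β < lam, ∀ f : WalkerModule R p β →ₗ[R] C,
      ∃ g : WalkerModule R p β →ₗ[R] B, π ∘ₗ g = f)
    (hN : N = LinearMap.ker π)
    {τ σ : Ordinal.{w}} (hτσ : τ < σ) (hσ : σ < lam)
    {x : B} (hxN : x ∈ N) (hx : x ∈ pPow R p B σ) :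
    ∃ y, y ∈ N ∧ y ∈ pPow R p B τ ∧ p • y = x := by
  obtain ⟨y₀, hy₀, hpy₀⟩ := exists_smul_eq_of_mem_pPow hτσ hx
  have hπy₀ : π y₀ ∈ pPow R p C τ := pPow_map_le π τ ⟨y₀, hy₀, rfl⟩
  have hπx : π x = 0 := by rw [hN] at hxN; exact hxN
  have hpπy₀ : p • π y₀ = 0 := by rw [← map_smul, hpy₀, hπx]
  obtain ⟨f, hf⟩ := exists_hom_of_mem (β := τ) (π y₀) hπy₀ hpπy₀
  obtain ⟨g, hg⟩ := Hlift τ (lt_trans hτσ hσ) f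
  set z := g (walkerTop R p τ) with hz
  have hπz : π z = π y₀ := by
    have := LinearMap.congr_fun hg (walkerTop R p τ)
    rw [LinearMap.comp_apply] at this
    rw [hz, this, hf]
  refine ⟨y₀ - z, ?_, sub_mem hy₀ (hom_walkerTop_mem g), ?_⟩
  · rw [hN, LinearMap.mem_ker, map_sub, hπz, _root_.sub_self]
  · rw [smul_sub, smul_hom_walkerTop, _root_.sub_zero, hpy₀]

lemma lift_to_bal (hp : Irreducible p) (hlam : Order.IsSuccLimit lam)
    (hπ : Function.Surjective π) (hN : N = LinearMap.ker π)
    (hC : Module.IsTorsion R C)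
    (Hlift : ∀ β < lam, ∀ f : WalkerModule R p β →ₗ[R] C,
      ∃ g : WalkerModule R p β →ₗ[R] B, π ∘ₗ g = f)
    {σ : Ordinal.{w}} (hσ : σ < lam) :
    pPow R p B σ ⊓ N = (pPow R p (↥N) σ).map N.subtype ∧
      pPow R p (B ⧸ N) σ = (pPow R p B σ ⊔ N).map N.mkQ := by
  constructor
  · refine le_antisymm ?_ (le_inf (pPow_map_le N.subtype σ)
      (le_trans (Submodule.map_subtype_le N _) le_rfl))
    -- hard inclusion by transfinite induction
    have main : ∀ σ : Ordinal.{w}, σ < lam → ∀ x : B, x ∈ pPow R p B σ → x ∈ N →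
        x ∈ (pPow R p (↥N) σ).map N.subtype := by
      intro σ
      induction σ using Ordinal.induction with
      | h σ IH =>
        intro hσ x hx hxN
        rcases Ordinal.zero_or_succ_or_isSuccLimit σ with rfl | ⟨ρ, rfl⟩ | hlim
        · exact ⟨⟨x, hxN⟩, by rw [pPow_zero]; trivial, rfl⟩
        · rw [← Ordinal.add_one_eq_succ] at *
          obtain ⟨y, hyN, hy, hpy⟩ := lift_N_step Hlift hN (lt_add_one ρ) hσ hxN hx
          obtain ⟨m, hm, hmy⟩ := IH ρ (lt_add_one ρ) (lt_trans (lt_add_one ρ) hσ) y hy hyN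
          refine ⟨p • m, mem_pPow_succ.mpr ⟨m, hm, rfl⟩, ?_⟩
          rw [map_smul, hmy, hpy]
        · have hmem : ∀ ρ : Set.Iio σ, (⟨x, hxN⟩ : ↥N) ∈ pPow R p (↥N) ρ.1 := by
            intro ⟨ρ, hρ⟩
            obtain ⟨m, hm, hmx⟩ := IH ρ hρ (lt_trans hρ hσ) x
              (pPow_anti (le_of_lt hρ) hx) hxN
            have : m = ⟨x, hxN⟩ := Subtype.ext hmx
            rwa [← this]
          refine ⟨⟨x, hxN⟩, ?_, rfl⟩
          rw [pPow_limit R p (↥N) σ hlim]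
          exact Submodule.mem_iInf _ |>.mpr hmem
    intro x hx
    exact main σ hσ x hx.1 hx.2
  · refine le_antisymm ?_ ?_
    · -- hard inclusion via lift_surj_ppow
      have hle : N ≤ LinearMap.ker π := le_of_eq hN
      set μ : (B ⧸ N) →ₗ[R] C := N.liftQ π hle with hμ
      have hμmk : ∀ x : B, μ (N.mkQ x) = π x := fun x => rfl
      have hμinj : Function.Injective μ := by
        rw [← LinearMap.ker_eq_bot]
        exact Submodule.ker_liftQ_eq_bot _ _ _ (le_of_eq hN.symm)
      intro q hq
      have hμq : μ q ∈ pPow R p C σ := pPow_map_le μ σ ⟨q, hq, rfl⟩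
      obtain ⟨x, hxmem, hxq⟩ := lift_surj_ppow hp hlam hC Hlift hσ hμq
      have hqx : q = N.mkQ x := by
        apply hμinj
        rw [hμmk, hxq]
      exact ⟨x, Submodule.mem_sup_left hxmem, hqx.symm⟩
    · rw [Submodule.map_sup]
      refine sup_le (pPow_map_le N.mkQ σ) ?_
      rintro _ ⟨n, hn, rfl⟩
      have : N.mkQ n = 0 := (Submodule.Quotient.mk_eq_zero N).mpr hn
      rw [this]; exact zero_mem _

end main2

theorem stmt6 (R : Type u) [CommRing R] [IsDomain R] [IsDiscreteValuationRing R]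
    (p : R) (hp : Irreducible p) (lam : Ordinal.{w}) (hlam : Order.IsSuccLimit lam)
    (A B C : Type v) [AddCommGroup A] [Module R A] [AddCommGroup B] [Module R B]
    [AddCommGroup C] [Module R C]
    (hA : Module.IsTorsion R A) (hB : Module.IsTorsion R B) (hC : Module.IsTorsion R C)
    (i : A →ₗ[R] B) (π : B →ₗ[R] C)
    (hi : Function.Injective i) (hπ : Function.Surjective π)
    (hexact : LinearMap.range i = LinearMap.ker π) :
    (IsLamBalanced R p lam (LinearMap.range i) ↔
      ∀ β < lam, ∀ f : WalkerModule R p β →ₗ[R] C,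
        ∃ g : WalkerModule R p β →ₗ[R] B, π ∘ₗ g = f) ∧
    (IsLamBalanced R p lam (LinearMap.range i) ↔
      ∀ β < lam,
        (Function.Injective fun h : WalkerModule R p β →ₗ[R] A => i ∘ₗ h) ∧
        (∀ g : WalkerModule R p β →ₗ[R] B, π ∘ₗ g = 0 →
          ∃ h : WalkerModule R p β →ₗ[R] A, i ∘ₗ h = g) ∧
        (Function.Surjective fun g : WalkerModule R p β →ₗ[R] B => π ∘ₗ g)) := by
  have hN : LinearMap.range i = LinearMap.ker π := hexact
  have main : IsLamBalanced R p lam (LinearMap.range i) ↔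
      ∀ β < lam, ∀ f : WalkerModule R p β →ₗ[R] C,
        ∃ g : WalkerModule R p β →ₗ[R] B, π ∘ₗ g = f := by
    constructor
    · intro Hbal β hβ f
      exact bal_to_lift hlam hπ hN (fun σ hσ => Hbal σ hσ) hβ f
    · intro Hlift σ hσ
      exact lift_to_bal hp hlam hπ hN hC Hlift hσ
  refine ⟨main, main.trans ?_⟩
  constructor
  · intro Hlift β hβ
    refine ⟨?_, ?_, fun f => Hlift β hβ f⟩
    · intro h₁ h₂ h12
      have h12' : i ∘ₗ h₁ = i ∘ₗ h₂ := h12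
      exact LinearMap.ext fun x => hi (LinearMap.congr_fun h12' x)
    · intro g hg
      have hmem : ∀ x, g x ∈ LinearMap.range i := by
        intro x
        rw [hexact, LinearMap.mem_ker]
        exact LinearMap.congr_fun hg x
      set e := LinearEquiv.ofInjective i hi with he
      have hcoe : ∀ y : LinearMap.range i, i (e.symm y) = (y : B) := by
        intro y
        have h1 : (↑(e (e.symm y)) : B) = i (e.symm y) := by
          rw [he]
          exact LinearEquiv.ofInjective_apply i (e.symm y)
        rw [← h1, e.apply_symm_apply]
      refine ⟨(e.symm : LinearMap.range i →ₗ[R] A) ∘ₗ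
        g.codRestrict (LinearMap.range i) hmem, ?_⟩
      apply LinearMap.ext
      intro x
      simp only [LinearMap.comp_apply, LinearEquiv.coe_coe]
      rw [hcoe]
      rfl
  · intro H β hβ
    exact (H β hβ).2.2
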